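/- InqBQ is not entailment-compact: there exist a set of formulas Φ and a formula ψ such that Φ ⊨ ψ (entailment over all first-order information models), but for every finite Φ₀ ⊆ Φ, Φ₀ ⊭ ψ. -/

import Mathlib

namespace InqBQ

/-- A signature: predicate symbols and function symbols, each with an arity. -/
structure Sig where
  Pred : Type
  parity : Pred → ℕ
  Func : Type
  farity : Func → ℕ

/-- Terms over a signature, with variables indexed by `ℕ`. -/
inductive Term (σ : Sig) : Type where
  | var : ℕ → Term σ
  | func : (f : σ.Func) → (Fin (σ.farity f) → Term σ) → Term σ

/-- Formulas of InqBQ. -/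
inductive Formula (σ : Sig) : Type where
  | pred : (P : σ.Pred) → (Fin (σ.parity P) → Term σ) → Formula σ
  | eq : Term σ → Term σ → Formula σ
  | falsum : Formula σ
  | conj : Formula σ → Formula σ → Formula σ
  | idisj : Formula σ → Formula σ → Formula σ
  | impl : Formula σ → Formula σ → Formula σ
  | all : ℕ → Formula σ → Formula σ
  | iex : ℕ → Formula σ → Formula σ

variable {σ : Sig}

/-- ¬φ := φ → ⊥ -/
def Formula.neg (φ : Formula σ) : Formula σ := .impl φ .falsum

/-- ?φ := φ ⩒ ¬φ -/
def Formula.qm (φ : Formula σ) : Formula σ := .idisj φ φ.neg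

/-- ⊤ := ¬⊥ -/
def Formula.verum : Formula σ := Formula.neg .falsum

/-- Classical formulas: no inquisitive disjunction, no inquisitive existential. -/
def Formula.IsClassical : Formula σ → Prop
  | .pred _ _ => True
  | .eq _ _ => True
  | .falsum => True
  | .conj φ ψ => φ.IsClassical ∧ ψ.IsClassical
  | .idisj _ _ => False
  | .impl φ ψ => φ.IsClassical ∧ ψ.IsClassical
  | .all _ φ => φ.IsClassical
  | .iex _ _ => False

/-- The variable `n` occurs in a term. -/
def Term.VarOccurs : Term σ → ℕ → Prop
  | .var m, n => m = n
  | .func _ ts, n => ∃ i, (ts i).VarOccurs n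

/-- The variable `n` occurs free in a formula. -/
def Formula.FreeVar : Formula σ → ℕ → Prop
  | .pred _ ts, n => ∃ i, (ts i).VarOccurs n
  | .eq t t', n => t.VarOccurs n ∨ t'.VarOccurs n
  | .falsum, _ => False
  | .conj φ ψ, n => φ.FreeVar n ∨ ψ.FreeVar n
  | .idisj φ ψ, n => φ.FreeVar n ∨ ψ.FreeVar n
  | .impl φ ψ, n => φ.FreeVar n ∨ ψ.FreeVar n
  | .all x φ, n => n ≠ x ∧ φ.FreeVar n
  | .iex x φ, n => n ≠ x ∧ φ.FreeVar n

/-- A sentence is a formula with no free variables. -/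
def Formula.IsSentence (φ : Formula σ) : Prop := ∀ n, ¬ φ.FreeVar n

/-- A first-order information model `M = (W, D, I, ∼)`. -/
structure Model (σ : Sig) where
  W : Type
  D : Type
  wNonempty : Nonempty W
  dNonempty : Nonempty D
  predI : W → (P : σ.Pred) → (Fin (σ.parity P) → D) → Prop
  funcI : W → (f : σ.Func) → (Fin (σ.farity f) → D) → D
  eqI : W → D → D → Prop
  eqEquiv : ∀ w, Equivalence (eqI w)
  predCongr : ∀ w P (as bs : Fin (σ.parity P) → D),
      (∀ i, eqI w (as i) (bs i)) → (predI w P as ↔ predI w P bs)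
  funcCongr : ∀ w f (as bs : Fin (σ.farity f) → D),
      (∀ i, eqI w (as i) (bs i)) → eqI w (funcI w f as) (funcI w f bs)

/-- Denotation `[t]^g_w` of a term at a world under an assignment. -/
def Term.val (M : Model σ) (w : M.W) (g : ℕ → M.D) : Term σ → M.D
  | .var n => g n
  | .func f ts => M.funcI w f (fun i => (ts i).val M w g)

/-- The support relation `M, s ⊨_g φ`. -/
def Support (M : Model σ) : Set M.W → (ℕ → M.D) → Formula σ → Prop
  | s, g, .pred P ts => ∀ w ∈ s, M.predI w P (fun i => (ts i).val M w g)
  | s, g, .eq t t' => ∀ w ∈ s, M.eqI w (t.val M w g) (t'.val M w g)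
  | s, _, .falsum => s = ∅
  | s, g, .conj φ ψ => Support M s g φ ∧ Support M s g ψ
  | s, g, .idisj φ ψ => Support M s g φ ∨ Support M s g ψ
  | s, g, .impl φ ψ => ∀ t : Set M.W, t ⊆ s → Support M t g φ → Support M t g ψ
  | s, g, .all x φ => ∀ d : M.D, Support M s (Function.update g x d) φ
  | s, g, .iex x φ => ∃ d : M.D, Support M s (Function.update g x d) φ

/-- Id-models: `=` is interpreted as identity on the domain at each world. -/
def Model.IsId (M : Model σ) : Prop := ∀ w (d d' : M.D), M.eqI w d d' ↔ d = d'

/-- Entailment in InqBQ. -/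
def Entails (Φ : Set (Formula σ)) (ψ : Formula σ) : Prop :=
  ∀ (M : Model σ) (s : Set M.W) (g : ℕ → M.D),
    (∀ φ ∈ Φ, Support M s g φ) → Support M s g ψ

/-- Entailment restricted to id-models. -/
def EntailsId (Φ : Set (Formula σ)) (ψ : Formula σ) : Prop :=
  ∀ (M : Model σ), M.IsId → ∀ (s : Set M.W) (g : ℕ → M.D),
    (∀ φ ∈ Φ, Support M s g φ) → Support M s g ψ

/-- Validity in InqBQ. -/
def Valid (ψ : Formula σ) : Prop :=
  ∀ (M : Model σ) (s : Set M.W) (g : ℕ → M.D), Support M s g ψ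

/-- Validity over id-models. -/
def IdValid (ψ : Formula σ) : Prop :=
  ∀ (M : Model σ), M.IsId → ∀ (s : Set M.W) (g : ℕ → M.D), Support M s g ψ

/-- Equivalence of formulas. -/
def FmEquiv (φ ψ : Formula σ) : Prop :=
  ∀ (M : Model σ) (s : Set M.W) (g : ℕ → M.D), Support M s g φ ↔ Support M s g ψ

/-- A formula is truth-conditional if support at a state reduces to truth at each world. -/
def TruthConditional (φ : Formula σ) : Prop :=
  ∀ (M : Model σ) (s : Set M.W) (g : ℕ → M.D),
    Support M s g φ ↔ ∀ w ∈ s, Support M {w} g φ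

/-- A standard (Tarskian) relational structure for the signature. -/
structure Struc (σ : Sig) where
  D : Type
  dNonempty : Nonempty D
  predI : (P : σ.Pred) → (Fin (σ.parity P) → D) → Prop
  funcI : (f : σ.Func) → (Fin (σ.farity f) → D) → D

/-- Tarskian term denotation. -/
def Term.tval (A : Struc σ) (g : ℕ → A.D) : Term σ → A.D
  | .var n => g n
  | .func f ts => A.funcI f (fun i => (ts i).tval A g)

/-- Standard Tarskian satisfaction (reading `→` as material implication, `=` as identity). -/
def TSat (A : Struc σ) : (ℕ → A.D) → Formula σ → Prop
  | g, .pred P ts => A.predI P (fun i => (ts i).tval A g)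
  | g, .eq t t' => t.tval A g = t'.tval A g
  | _, .falsum => False
  | g, .conj φ ψ => TSat A g φ ∧ TSat A g ψ
  | g, .idisj φ ψ => TSat A g φ ∨ TSat A g ψ
  | g, .impl φ ψ => TSat A g φ → TSat A g ψ
  | g, .all x φ => ∀ d : A.D, TSat A (Function.update g x d) φ
  | g, .iex x φ => ∃ d : A.D, TSat A (Function.update g x d) φ

/-- Classical first-order (Tarskian) entailment. -/
def FOLEntails (Γ : Set (Formula σ)) (α : Formula σ) : Prop :=
  ∀ (A : Struc σ) (g : ℕ → A.D), (∀ γ ∈ Γ, TSat A g γ) → TSat A g α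

/-- The setoid on the domain given by `∼_w`. -/
def Model.setoidAt (M : Model σ) (w : M.W) : Setoid M.D := ⟨M.eqI w, M.eqEquiv w⟩

/-- The quotient relational structure `𝓜_w = (D/∼_w, I_w^∼)` induced at world `w`. -/
noncomputable def Model.quotStruc (M : Model σ) (w : M.W) : Struc σ where
  D := Quotient (M.setoidAt w)
  dNonempty := Nonempty.map (Quotient.mk (M.setoidAt w)) M.dNonempty
  predI P as := ∃ bs : Fin (σ.parity P) → M.D,
    (∀ i, Quotient.mk (M.setoidAt w) (bs i) = as i) ∧ M.predI w P bs
  funcI f as := Quotient.mk (M.setoidAt w) (M.funcI w f (fun i => (as i).out))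

/-- λt := ∃̷x (x = t). -/
def lam (x : ℕ) (t : Term σ) : Formula σ := .iex x (.eq (.var x) t)

/-- Conjunction of a finite list of formulas. -/
def conjList (l : List (Formula σ)) : Formula σ := l.foldr .conj Formula.verum

/-- x ≠ t. -/
def neTm (x : ℕ) (t : Term σ) : Formula σ := (Formula.eq (.var x) t).neg

/-- ∃̷x (x ≠ t). -/
def iexNe (t : Term σ) : Formula σ := .iex 0 (neTm 0 t)

/-- η := (=(a;b) ∧ =(b;a) ∧ ∃̷x(x≠b)) → ∃̷x(x≠a). -/
def etaOf (a b : Term σ) : Formula σ :=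
  .impl (.conj (.impl (lam 0 a) (lam 0 b))
          (.conj (.impl (lam 0 b) (lam 0 a)) (iexNe b)))
    (iexNe a)

/-- θ := ∃̷x ∃̷y ¬(x = a ∧ y = b). -/
def thetaOf (a b : Term σ) : Formula σ :=
  .iex 0 (.iex 1 (Formula.neg (.conj (.eq (.var 0) a) (.eq (.var 1) b))))

/-- ρ := ∀x∀y ?(x = y). -/
def rho : Formula σ := .all 0 (.all 1 (Formula.qm (.eq (.var 0) (.var 1))))

/-- The signature with exactly two constant symbols `a`, `b` (and no predicates). -/
def sigAB : Sig where
  Pred := Empty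
  parity := fun P => P.elim
  Func := Bool
  farity := fun _ => 0

/-- The constant `a`. -/
def tA : Term sigAB := .func false Fin.elim0

/-- The constant `b`. -/
def tB : Term sigAB := .func true Fin.elim0

def etaAB : Formula sigAB := etaOf tA tB

def thetaAB : Formula sigAB := thetaOf tA tB

/-- `a_w`. -/
def aVal (M : Model sigAB) (w : M.W) : M.D := M.funcI w false Fin.elim0

/-- `b_w`. -/
def bVal (M : Model sigAB) (w : M.W) : M.D := M.funcI w true Fin.elim0

/-- `R_s = {(a_w, b_w) | w ∈ s}`. -/
def RelOf (M : Model sigAB) (s : Set M.W) : Set (M.D × M.D) :=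
  {p | ∃ w ∈ s, p = (aVal M w, bVal M w)}

/-- An id-model (for the signature with the two constants a, b) is full if `R_W = D × D`. -/
def Model.IsFull (M : Model sigAB) : Prop := RelOf M Set.univ = Set.univ

/-- Classical existential quantifier ∃xφ := ¬∀x¬φ. -/
def cExists (x : ℕ) (φ : Formula σ) : Formula σ := (Formula.all x φ.neg).neg

/-- ⋀_{i<j<n} (xᵢ ≠ xⱼ). -/
def distinctFm (n : ℕ) : Formula sigAB :=
  conjList ((List.range n).flatMap fun i => (List.range n).filterMap fun j =>
    if i < j then some ((Formula.eq (.var i) (.var j)).neg) else none)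

/-- χₙ := ∃x₁…∃xₙ ⋀_{i<j} (xᵢ ≠ xⱼ), expressing that there are at least n elements. -/
def chi (n : ℕ) : Formula sigAB := (List.range n).foldr cExists (distinctFm n)

/-- The canonical full id-model over a nonempty domain `D`: worlds are pairs `(d, e)`,
with `a_{(d,e)} = d` and `b_{(d,e)} = e`. -/
def canonModel (D : Type) (hD : Nonempty D) : Model sigAB where
  W := D × D
  D := D
  wNonempty := Nonempty.map (fun d => (d, d)) hD
  dNonempty := hD
  predI := fun _ P => P.elim
  funcI := fun w f _ => cond f w.2 w.1
  eqI := fun _ => Eq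
  eqEquiv := fun _ => eq_equivalence
  predCongr := fun _ P => P.elim
  funcCongr := fun _ _ _ _ _ => rfl

/-- Extending a signature with two fresh constant symbols `a`, `b`. -/
def sigExt (σ : Sig) : Sig where
  Pred := σ.Pred
  parity := σ.parity
  Func := σ.Func ⊕ Bool
  farity := Sum.elim σ.farity (fun _ => 0)

/-- Lift of a term to the extended signature. -/
def Term.lift : Term σ → Term (sigExt σ)
  | .var n => .var n
  | .func f ts => .func (Sum.inl f) (fun i => (ts i).lift)

/-- Lift of a formula to the extended signature. -/
def Formula.lift : Formula σ → Formula (sigExt σ)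
  | .pred P ts => .pred P (fun i => (ts i).lift)
  | .eq t t' => .eq t.lift t'.lift
  | .falsum => .falsum
  | .conj φ ψ => .conj φ.lift ψ.lift
  | .idisj φ ψ => .idisj φ.lift ψ.lift
  | .impl φ ψ => .impl φ.lift ψ.lift
  | .all x φ => .all x φ.lift
  | .iex x φ => .iex x φ.lift

/-- The fresh constant `a` of the extended signature. -/
def extA : Term (sigExt σ) := .func (Sum.inr false) Fin.elim0

/-- The fresh constant `b` of the extended signature. -/
def extB : Term (sigExt σ) := .func (Sum.inr true) Fin.elim0

/-- The canonical full id-model based on a relational structure `𝓜`: worlds are pairs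
`(d, e)`; `a_{(d,e)} = d`, `b_{(d,e)} = e`, and all symbols of `σ` are interpreted
rigidly as in `𝓜`. -/
def canonModelOf (A : Struc σ) : Model (sigExt σ) where
  W := A.D × A.D
  D := A.D
  wNonempty := Nonempty.map (fun d => (d, d)) A.dNonempty
  dNonempty := A.dNonempty
  predI := fun _ P => A.predI P
  funcI := fun w f => match f with
    | .inl f₀ => fun as => A.funcI f₀ as
    | .inr b => fun _ => cond b w.2 w.1
  eqI := fun _ => Eq
  eqEquiv := fun _ => eq_equivalence
  predCongr := fun _ P as bs h => by
    have hab : as = bs := funext fun i => h i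
    rw [hab]
  funcCongr := fun w f as bs h => by
    have hab : as = bs := funext fun i => h i
    rw [hab]

/-! ### Auxiliary development for non-compactness -/

/-- δₙ : ∃̷x₀ … ∃̷x_{n-1} ⋀_{i<j} xᵢ ≠ xⱼ (inquisitive existentials). -/
def delta (n : ℕ) : Formula sigAB := (List.range n).foldr .iex (distinctFm n)

/-- Count of nesting of inquisitive existentials. -/
def iexCount : Formula σ → ℕ
  | .pred _ _ => 0
  | .eq _ _ => 0
  | .falsum => 0
  | .conj φ ψ => max (iexCount φ) (iexCount ψ)
  | .idisj φ ψ => max (iexCount φ) (iexCount ψ)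
  | .impl φ ψ => max (iexCount φ) (iexCount ψ)
  | .all _ φ => iexCount φ
  | .iex _ φ => iexCount φ + 1

lemma iexCount_foldr_iex (l : List ℕ) (φ : Formula σ) :
    iexCount (l.foldr Formula.iex φ) = iexCount φ + l.length := by
  induction l with
  | nil => simp
  | cons a l ih => simp [iexCount, ih]; omega

lemma le_iexCount_delta (n : ℕ) : n ≤ iexCount (delta n) := by
  rw [delta, iexCount_foldr_iex]; simp

lemma support_neg_eq (M : Model σ) (s : Set M.W) (g : ℕ → M.D) (t t' : Term σ) :
    Support M s g ((Formula.eq t t').neg) ↔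
      ∀ w ∈ s, ¬ M.eqI w (t.val M w g) (t'.val M w g) := by
  constructor
  · intro h w hw hm
    have := h {w} (by simpa using hw)
      (by intro w' hw'; simp only [Set.mem_singleton_iff] at hw'; subst hw'; exact hm)
    exact Set.singleton_ne_empty w this
  · intro h u hu hsup
    ext w
    simp only [Set.mem_empty_iff_false, iff_false]
    intro hw
    exact h w (hu hw) (hsup w hw)

lemma support_conjList (M : Model σ) (s : Set M.W) (g : ℕ → M.D) (l : List (Formula σ)) :
    Support M s g (conjList l) ↔ ∀ φ ∈ l, Support M s g φ := by
  induction l with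
  | nil =>
    simp only [conjList, List.foldr_nil, List.not_mem_nil, false_implies, implies_true, iff_true]
    intro u hu hsup
    exact hsup
  | cons a l ih =>
    simp only [conjList, List.foldr_cons, List.mem_cons]
    constructor
    · rintro ⟨h1, h2⟩ φ (rfl | hφ)
      · exact h1
      · exact (ih.mp h2) φ hφ
    · intro h
      exact ⟨h a (Or.inl rfl), ih.mpr fun φ hφ => h φ (Or.inr hφ)⟩

lemma support_distinctFm (M : Model sigAB) (s : Set M.W) (g : ℕ → M.D) (n : ℕ) :
    Support M s g (distinctFm n) ↔
      ∀ i j, i < j → j < n → ∀ w ∈ s, ¬ M.eqI w (g i) (g j) := by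
  rw [distinctFm, support_conjList]
  constructor
  · intro h i j hij hj w hw
    have hmem : ((Formula.eq (.var i) (.var j)).neg : Formula sigAB) ∈
        ((List.range n).flatMap (fun i => (List.range n).filterMap fun j =>
          if i < j then some ((Formula.eq (.var i) (.var j)).neg) else none)
          : List (Formula sigAB)) := by
      simp only [List.mem_flatMap, List.mem_filterMap, List.mem_range]
      exact ⟨i, lt_trans hij hj, j, hj, by simp [hij]⟩
    have := (support_neg_eq M s g _ _).mp (h _ hmem) w hw
    simpa [Term.val] using this
  · intro h φ hφ
    simp only [List.mem_flatMap, List.mem_filterMap, List.mem_range] at hφ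
    obtain ⟨i, hi, j, hj, hcond⟩ := hφ
    by_cases hij : i < j
    · simp only [hij, if_true, Option.some.injEq] at hcond
      subst hcond
      rw [support_neg_eq]
      intro w hw
      simpa [Term.val] using h i j hij hj w hw
    · simp [hij] at hcond

lemma support_foldr_iex (M : Model σ) (l : List ℕ) (φ : Formula σ) (s : Set M.W) (g : ℕ → M.D) :
    Support M s g (l.foldr Formula.iex φ) ↔
      ∃ g', (∀ x, x ∉ l → g' x = g x) ∧ Support M s g' φ := by
  induction l generalizing g with
  | nil =>
    simp only [List.foldr_nil, List.not_mem_nil, not_false_iff, true_implies]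
    constructor
    · intro h; exact ⟨g, fun _ => rfl, h⟩
    · rintro ⟨g', hg', h⟩
      have : g' = g := funext fun x => hg' x
      rwa [this] at h
  | cons a l ih =>
    simp only [List.foldr_cons]
    constructor
    · rintro ⟨d, hd⟩
      obtain ⟨g', hg', h⟩ := (ih _).mp hd
      refine ⟨g', ?_, h⟩
      intro x hx
      simp only [List.mem_cons, not_or] at hx
      rw [hg' x hx.2, Function.update_of_ne hx.1]
    · rintro ⟨g', hg', h⟩
      refine ⟨g' a, (ih _).mpr ⟨g', ?_, h⟩⟩
      intro x hx
      by_cases hxa : x = a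
      · subst hxa; simp
      · rw [Function.update_of_ne hxa, hg' x (by simp [hx, hxa])]

lemma val_tA (M : Model sigAB) (w : M.W) (g : ℕ → M.D) : Term.val M w g tA = aVal M w := by
  show M.funcI w false _ = M.funcI w false _
  congr 1
  funext i
  exact i.elim0

lemma val_tB (M : Model sigAB) (w : M.W) (g : ℕ → M.D) : Term.val M w g tB = bVal M w := by
  show M.funcI w true _ = M.funcI w true _
  congr 1
  funext i
  exact i.elim0

lemma support_lam_iff (M : Model sigAB) (s : Set M.W) (g : ℕ → M.D) (t : Term sigAB)
    (v : M.W → M.D) (hv : ∀ w g', Term.val M w g' t = v w) :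
    Support M s g (lam 0 t) ↔ ∃ d, ∀ w ∈ s, M.eqI w d (v w) := by
  constructor
  · rintro ⟨d, hd⟩
    refine ⟨d, fun w hw => ?_⟩
    have := hd w hw
    rwa [show Term.val M w (Function.update g 0 d) (.var 0) = d by simp [Term.val],
      hv w _] at this
  · rintro ⟨d, hd⟩
    refine ⟨d, fun w hw => ?_⟩
    rw [show Term.val M w (Function.update g 0 d) (.var 0) = d by simp [Term.val], hv w _]
    exact hd w hw

lemma support_iexNe_iff (M : Model sigAB) (s : Set M.W) (g : ℕ → M.D) (t : Term sigAB)
    (v : M.W → M.D) (hv : ∀ w g', Term.val M w g' t = v w) :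
    Support M s g (iexNe t) ↔ ∃ d, ∀ w ∈ s, ¬ M.eqI w d (v w) := by
  constructor
  · rintro ⟨d, hd⟩
    rw [neTm, support_neg_eq] at hd
    refine ⟨d, fun w hw => ?_⟩
    have := hd w hw
    rwa [show Term.val M w (Function.update g 0 d) (.var 0) = d by simp [Term.val],
      hv w _] at this
  · rintro ⟨d, hd⟩
    refine ⟨d, ?_⟩
    rw [neTm, support_neg_eq]
    intro w hw
    rw [show Term.val M w (Function.update g 0 d) (.var 0) = d by simp [Term.val], hv w _]
    exact hd w hw

lemma support_theta_iff (M : Model sigAB) (s : Set M.W) (g : ℕ → M.D) :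
    Support M s g thetaAB ↔
      ∃ d e, ∀ w ∈ s, ¬ (M.eqI w d (aVal M w) ∧ M.eqI w e (bVal M w)) := by
  constructor
  · rintro ⟨d, e, hne⟩
    refine ⟨d, e, fun w hw hc => ?_⟩
    set g'' := Function.update (Function.update g 0 d) 1 e with hg''
    have hsing : Support M {w} g'' (Formula.conj (.eq (.var 0) tA) (.eq (.var 1) tB)) := by
      constructor
      · intro w' hw'
        simp only [Set.mem_singleton_iff] at hw'
        subst hw'
        rw [show Term.val M w' g'' (.var 0) = d by simp [Term.val, hg''], val_tA]
        exact hc.1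
      · intro w' hw'
        simp only [Set.mem_singleton_iff] at hw'
        subst hw'
        rw [show Term.val M w' g'' (.var 1) = e by simp [Term.val, hg''], val_tB]
        exact hc.2
    have := hne {w} (by simpa using hw) hsing
    exact Set.singleton_ne_empty w this
  · rintro ⟨d, e, h⟩
    refine ⟨d, e, fun u hu hc => ?_⟩
    ext w
    simp only [Set.mem_empty_iff_false, iff_false]
    intro hw
    set g'' := Function.update (Function.update g 0 d) 1 e with hg''
    have h1 := hc.1 w hw
    have h2 := hc.2 w hw
    rw [show Term.val M w g'' (.var 0) = d by simp [Term.val, hg''], val_tA] at h1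
    rw [show Term.val M w g'' (.var 1) = e by simp [Term.val, hg''], val_tB] at h2
    exact h w (hu hw) ⟨h1, h2⟩

lemma canon_aVal (D : Type) (hD : Nonempty D) (w : (canonModel D hD).W) :
    aVal (canonModel D hD) w = w.1 := rfl

lemma canon_bVal (D : Type) (hD : Nonempty D) (w : (canonModel D hD).W) :
    bVal (canonModel D hD) w = w.2 := rfl

lemma canon_eqI (D : Type) (hD : Nonempty D) (w : (canonModel D hD).W) (d d' : D) :
    (canonModel D hD).eqI w d d' ↔ d = d' := Iff.rfl

lemma support_rho_canon (D : Type) (hD : Nonempty D) (s : Set (canonModel D hD).W)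
    (g : ℕ → D) : Support (canonModel D hD) s g rho := by
  intro d e
  by_cases hde : d = e
  · refine Or.inl (fun w hw => ?_)
    show Function.update (Function.update g 0 d) 1 e 0
        = Function.update (Function.update g 0 d) 1 e 1
    subst hde; rfl
  · refine Or.inr ?_
    rw [support_neg_eq]
    intro w hw hm
    apply hde
    exact hm

lemma not_support_theta_canon (D : Type) (hD : Nonempty D) (g : ℕ → D) :
    ¬ Support (canonModel D hD) Set.univ g thetaAB := by
  intro hθ
  obtain ⟨d, e, h⟩ := (support_theta_iff (canonModel D hD) Set.univ g).mp hθ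
  exact h (d, e) (Set.mem_univ _) ⟨rfl, rfl⟩

lemma support_eta_canon (D : Type) [Finite D] (hD : Nonempty D) (g : ℕ → D) :
    Support (canonModel D hD) Set.univ g etaAB := by
  set M := canonModel D hD with hM
  haveI : Finite M.D := ‹Finite D›
  haveI : Nonempty M.D := hD
  intro t _ hA
  obtain ⟨hX, hY, hZ⟩ := hA
  obtain ⟨e₀, he₀⟩ := (support_iexNe_iff M t g tB _ (fun w g' => val_tB M w g')).mp hZ
  rw [support_iexNe_iff M t g tA _ (fun w g' => val_tA M w g')]
  by_contra hno
  push_neg at hno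
  choose F hFt hF1 using hno
  have hF1' : ∀ d : M.D, d = (F d).1 := hF1
  set G : M.D → M.D := fun d => (F d).2 with hG
  have hGinj : Function.Injective G := by
    intro d d' hGdd'
    have hsub : ({F d, F d'} : Set M.W) ⊆ t := by
      intro w hw
      rcases hw with rfl | hw
      · exact hFt d
      · simp only [Set.mem_singleton_iff] at hw
        subst hw
        exact hFt d'
    have hlamB : Support M {F d, F d'} g (lam 0 tB) := by
      rw [support_lam_iff M _ g tB _ (fun w g' => val_tB M w g')]
      refine ⟨G d, fun w hw => ?_⟩
      simp only [Set.mem_insert_iff, Set.mem_singleton_iff] at hw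
      rcases hw with rfl | rfl
      · rfl
      · show G d = (F d').2
        rw [hGdd']
    obtain ⟨c, hc⟩ := (support_lam_iff M _ g tA _ (fun w g' => val_tA M w g')).mp
      (hY _ hsub hlamB)
    have h1 : c = (F d).1 := hc (F d) (by simp)
    have h2 : c = (F d').1 := hc (F d') (by simp)
    rw [hF1' d, hF1' d', ← h1, ← h2]
  have hGne : ∀ d, G d ≠ e₀ := fun d h => he₀ (F d) (hFt d) h.symm
  obtain ⟨d, hd⟩ := Finite.injective_iff_surjective.mp hGinj e₀
  exact hGne d hd

lemma exists_inj_not_surj (Q : Type) [Infinite Q] :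
    ∃ f : Q → Q, Function.Injective f ∧ ∃ q₀ : Q, ∀ q, f q ≠ q₀ := by
  classical
  let e := Infinite.natEmbedding Q
  refine ⟨fun q => if h : ∃ k, e k = q then e (h.choose + 1) else q, ?_, e 0, ?_⟩
  · intro q q' hqq'
    simp only at hqq'
    by_cases h1 : ∃ k, e k = q <;> by_cases h2 : ∃ k, e k = q'
    · rw [dif_pos h1, dif_pos h2] at hqq'
      have h3 := e.injective hqq'
      have hk : h1.choose = h2.choose := by omega
      rw [← h1.choose_spec, ← h2.choose_spec, hk]
    · rw [dif_pos h1, dif_neg h2] at hqq'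
      exact absurd ⟨_, hqq'⟩ h2
    · rw [dif_neg h1, dif_pos h2] at hqq'
      exact absurd ⟨_, hqq'.symm⟩ h1
    · rwa [dif_neg h1, dif_neg h2] at hqq'
  · intro q hq
    simp only at hq
    by_cases h1 : ∃ k, e k = q
    · rw [dif_pos h1] at hq
      simpa using e.injective hq
    · rw [dif_neg h1] at hq
      exact h1 ⟨0, hq.symm⟩

lemma support_delta_canon (N : ℕ) (g : ℕ → Fin (N+1))
    (s : Set (canonModel (Fin (N+1)) ⟨0⟩).W) (n : ℕ) (hn : n ≤ N + 1) :
    Support (canonModel (Fin (N+1)) ⟨0⟩) s g (delta n) := by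
  rw [delta]
  refine (support_foldr_iex _ _ _ _ _).mpr ?_
  refine ⟨fun k => if h : k < n then (⟨k, lt_of_lt_of_le h hn⟩ : Fin (N+1)) else g k,
    fun x hx => ?_, ?_⟩
  · simp only [List.mem_range] at hx
    exact dif_neg hx
  · refine (support_distinctFm _ _ _ _).mpr ?_
    intro i j hij hj w hw hEq
    have hEq' : (if h : i < n then (⟨i, lt_of_lt_of_le h hn⟩ : Fin (N+1)) else g i)
        = (if h : j < n then (⟨j, lt_of_lt_of_le h hn⟩ : Fin (N+1)) else g j) := hEq
    rw [dif_pos (lt_trans hij hj), dif_pos hj] at hEq'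
    have h2 : (⟨i, lt_of_lt_of_le (lt_trans hij hj) hn⟩ : Fin (N+1))
        = ⟨j, lt_of_lt_of_le hj hn⟩ := hEq'
    simp only [Fin.mk.injEq] at h2
    omega

/-- The set of premises: {η, ρ} ∪ {δₙ : n ∈ ℕ}. -/
def myPhi : Set (Formula sigAB) := {etaAB, rho} ∪ Set.range delta

lemma finite_no_entail (Φ₀ : Set (Formula sigAB)) (hsub : Φ₀ ⊆ myPhi)
    (hfin : Φ₀.Finite) : ¬ Entails Φ₀ thetaAB := by
  obtain ⟨N, hN⟩ := (hfin.image iexCount).bddAbove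
  intro hEnt
  apply not_support_theta_canon (Fin (N+1)) ⟨0⟩ (fun _ => 0)
  apply hEnt (canonModel (Fin (N+1)) ⟨0⟩) Set.univ (fun _ => (0 : Fin (N+1)))
  intro φ hφ
  have hφ' := hsub hφ
  simp only [myPhi, Set.mem_union, Set.mem_insert_iff, Set.mem_singleton_iff,
    Set.mem_range] at hφ'
  rcases hφ' with (rfl | rfl) | ⟨n, rfl⟩
  · exact support_eta_canon _ _ _
  · exact support_rho_canon _ _ _ _
  · refine support_delta_canon N _ _ n ?_
    have h1 : iexCount (delta n) ≤ N := hN (Set.mem_image_of_mem _ hφ)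
    have h2 := le_iexCount_delta n
    omega

lemma entails_main : Entails myPhi thetaAB := by
  intro M s g hsup
  have hEta : Support M s g etaAB := hsup _ (Or.inl (Or.inl rfl))
  have hRho : Support M s g rho := hsup _ (Or.inl (Or.inr rfl))
  have hDelta : ∀ n, Support M s g (delta n) := fun n => hsup _ (Or.inr ⟨n, rfl⟩)
  by_contra hθ
  rw [support_theta_iff] at hθ
  push_neg at hθ
  obtain ⟨d₀⟩ := M.dNonempty
  obtain ⟨w₀, hw₀s, -⟩ := hθ d₀ d₀
  -- the equivalence relation is uniform across s, thanks to ρ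
  have hsame : ∀ w ∈ s, ∀ d e : M.D, M.eqI w d e ↔ M.eqI w₀ d e := by
    intro w hw d e
    rcases (hRho d e : _ ∨ _) with h | h
    · have h1 : M.eqI w d e := by simpa [Term.val, Function.update] using h w hw
      have h2 : M.eqI w₀ d e := by simpa [Term.val, Function.update] using h w₀ hw₀s
      simp [h1, h2]
    · rw [support_neg_eq] at h
      have h1 : ¬ M.eqI w d e := by
        have := h w hw
        simpa [Term.val, Function.update] using this
      have h2 : ¬ M.eqI w₀ d e := by
        have := h w₀ hw₀s
        simpa [Term.val, Function.update] using this
      simp [h1, h2]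
  letI S : Setoid M.D := M.setoidAt w₀
  -- the quotient is infinite, thanks to the δₙ
  have hQinf : Infinite (Quotient S) := by
    rw [← not_finite_iff_infinite]
    intro hfinQ
    haveI := Fintype.ofFinite (Quotient S)
    set n := Fintype.card (Quotient S) + 1 with hn
    have hdn := hDelta n
    rw [delta, support_foldr_iex] at hdn
    obtain ⟨g', -, hg'⟩ := hdn
    rw [support_distinctFm] at hg'
    have hinj : Function.Injective (fun i : Fin n => Quotient.mk S (g' i)) := by
      intro i j hij
      by_contra hne
      have hne' : (i : ℕ) ≠ j := fun h => hne (Fin.ext h)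
      rcases lt_or_gt_of_ne hne' with hlt | hlt
      · exact hg' i j hlt j.isLt w₀ hw₀s (Quotient.exact hij)
      · exact hg' j i hlt i.isLt w₀ hw₀s (Quotient.exact hij.symm)
    have hcard := Fintype.card_le_of_injective _ hinj
    simp only [Fintype.card_fin] at hcard
    omega
  obtain ⟨f, hfinj, q₀, hq₀⟩ := exists_inj_not_surj (Quotient S)
  -- choose witnessing worlds
  have hθ2 : ∀ q : Quotient S, ∃ w, w ∈ s ∧
      M.eqI w q.out (aVal M w) ∧ M.eqI w (f q).out (bVal M w) := by
    intro q
    obtain ⟨w, hw, h1, h2⟩ := hθ q.out (f q).out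
    exact ⟨w, hw, h1, h2⟩
  choose W0 hW0s hW0a hW0b using hθ2
  have hkeyA : ∀ q, Quotient.mk S (aVal M (W0 q)) = q := by
    intro q
    have h1 : M.eqI w₀ q.out (aVal M (W0 q)) := (hsame _ (hW0s q) _ _).mp (hW0a q)
    calc Quotient.mk S (aVal M (W0 q)) = Quotient.mk S q.out :=
          Quotient.sound ((M.eqEquiv w₀).symm h1)
      _ = q := Quotient.out_eq q
  have hkeyB : ∀ q, Quotient.mk S (bVal M (W0 q)) = f q := by
    intro q
    have h1 : M.eqI w₀ (f q).out (bVal M (W0 q)) := (hsame _ (hW0s q) _ _).mp (hW0b q)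
    calc Quotient.mk S (bVal M (W0 q)) = Quotient.mk S (f q).out :=
          Quotient.sound ((M.eqEquiv w₀).symm h1)
      _ = f q := Quotient.out_eq (f q)
  set t := Set.range W0 with ht
  have hts : t ⊆ s := by
    rintro w ⟨q, rfl⟩
    exact hW0s q
  -- antecedent components of η
  have hcomp1 : Support M t g (Formula.impl (lam 0 tA) (lam 0 tB)) := by
    intro u hut hu
    rw [support_lam_iff M u g tA _ (fun w g' => val_tA M w g')] at hu
    rw [support_lam_iff M u g tB _ (fun w g' => val_tB M w g')]
    obtain ⟨d, hd⟩ := hu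
    refine ⟨(f (Quotient.mk S d)).out, fun w hw => ?_⟩
    obtain ⟨q, rfl⟩ := hut hw
    have h1 : M.eqI w₀ d (aVal M (W0 q)) := (hsame _ (hW0s q) _ _).mp (hd _ hw)
    have h2 : Quotient.mk S d = q := by rw [← hkeyA q]; exact Quotient.sound h1
    rw [h2]
    exact hW0b q
  have hcomp2 : Support M t g (Formula.impl (lam 0 tB) (lam 0 tA)) := by
    intro u hut hu
    rw [support_lam_iff M u g tB _ (fun w g' => val_tB M w g')] at hu
    rw [support_lam_iff M u g tA _ (fun w g' => val_tA M w g')]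
    obtain ⟨d, hd⟩ := hu
    by_cases hne : u = ∅
    · exact ⟨d, fun w hw => absurd hw (by simp [hne])⟩
    · obtain ⟨w₁, hw₁⟩ := Set.nonempty_iff_ne_empty.mpr hne
      obtain ⟨q₁, rfl⟩ := hut hw₁
      refine ⟨q₁.out, fun w hw => ?_⟩
      obtain ⟨q, rfl⟩ := hut hw
      have hfq : ∀ q' : Quotient S, W0 q' ∈ u → f q' = Quotient.mk S d := by
        intro q' hq'
        have h1 : M.eqI w₀ d (bVal M (W0 q')) := (hsame _ (hW0s q') _ _).mp (hd _ hq')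
        rw [← hkeyB q']
        exact (Quotient.sound h1).symm
      have hqq : q = q₁ := hfinj (by rw [hfq q hw, hfq q₁ hw₁])
      rw [← hqq]
      exact hW0a q
  have hcomp3 : Support M t g (iexNe tB) := by
    rw [support_iexNe_iff M t g tB _ (fun w g' => val_tB M w g')]
    refine ⟨q₀.out, ?_⟩
    rintro w ⟨q, rfl⟩ hc
    have h1 : M.eqI w₀ q₀.out (bVal M (W0 q)) := (hsame _ (hW0s q) _ _).mp hc
    apply hq₀ q
    rw [← hkeyB q, ← Quotient.out_eq q₀]
    exact (Quotient.sound h1).symm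
  have hC := hEta t hts ⟨hcomp1, hcomp2, hcomp3⟩
  rw [support_iexNe_iff M t g tA _ (fun w g' => val_tA M w g')] at hC
  obtain ⟨d, hd⟩ := hC
  apply hd (W0 (Quotient.mk S d)) ⟨Quotient.mk S d, rfl⟩
  -- d is equivalent to (⟦d⟧.out), which is equivalent to aVal at W0 ⟦d⟧
  have h1 : M.eqI w₀ (Quotient.mk S d).out (aVal M (W0 (Quotient.mk S d))) :=
    (hsame _ (hW0s _) _ _).mp (hW0a _)
  have h2 : M.eqI w₀ d (Quotient.mk S d).out := (M.eqEquiv w₀).symm (Quotient.mk_out d)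
  exact (hsame _ (hW0s _) _ _).mpr ((M.eqEquiv w₀).trans h2 h1)

/-- InqBQ is not entailment-compact (over all first-order information
models). -/
theorem inqbq_not_compact :
    ∃ (Φ : Set (Formula sigAB)) (ψ : Formula sigAB),
      Entails Φ ψ ∧ ∀ Φ₀ ⊆ Φ, Φ₀.Finite → ¬ Entails Φ₀ ψ := by
  exact ⟨myPhi, thetaAB, entails_main, fun Φ₀ hsub hfin => finite_no_entail Φ₀ hsub hfin⟩

end InqBQ
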